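/- For every n ≥ 2 and every 0 ≤ k ≤ n, the number of π ∈ D_n of type '0,≥2' with exactly k D-descents equals the number of π ∈ D_n of type '0,≥2' with exactly n-k D-descents, and likewise the number of π ∈ D_n of type '1' with exactly k D-descents equals the number of π ∈ D_n of type '1' with exactly n-k D-descents; equivalently, D_n^{0,≥2}(t) = t^n·D_n^{0,≥2}(t^{-1}) and D_n^1(t) = t^n·D_n^1(t^{-1}), i.e. both polynomials are palindromic. -/

import Mathlib

/-- A signed permutation of `{1,…,n}`, encoded as an (unsigned) permutation of
`Fin n` together with a choice of sign for each position.  The associated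
word is `π_1 π_2 ⋯ π_n` where `π_j = ± σ(j)`. -/
abbrev SignedPerm (n : ℕ) := Equiv.Perm (Fin n) × (Fin n → Bool)

namespace SignedPerm

/-- The letter `π_j` of the word of `p`, for `1 ≤ j ≤ n` (and `0` otherwise). -/
def word {n : ℕ} (p : SignedPerm n) (j : ℕ) : ℤ :=
  if h : 1 ≤ j ∧ j ≤ n then
    (if p.2 ⟨j - 1, by omega⟩ then -1 else 1) * ((p.1 ⟨j - 1, by omega⟩ : ℕ) + 1)
  else 0

/-- The letter `π_j`, with the type `D` convention `π_0 = -π_2`. -/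
def entry {n : ℕ} (p : SignedPerm n) (j : ℕ) : ℤ :=
  if j = 0 then -(p.word 2) else p.word j

/-- The set of `D`-descents of `p`: those `i ∈ {0,…,n-1}` with `π_i > π_{i+1}`. -/
def ddes {n : ℕ} (p : SignedPerm n) : Finset ℕ :=
  (Finset.range n).filter fun i => p.entry (i + 1) < p.entry i

/-- The number of `D`-descents of `p`. -/
def d {n : ℕ} (p : SignedPerm n) : ℕ := p.ddes.card

/-- Membership in the type `D` Coxeter group `D_n ⊆ B_n`:
the number of negative letters is even. -/
def inD {n : ℕ} (p : SignedPerm n) : Prop :=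
  Even (Finset.univ.filter (fun i => p.2 i = true)).card

/-- Type '1': descent at position `1` but not at `0`. -/
def type1 {n : ℕ} (p : SignedPerm n) : Prop := 1 ∈ p.ddes ∧ 0 ∉ p.ddes

/-- Type '0,1': descents at both positions `0` and `1`. -/
def type01 {n : ℕ} (p : SignedPerm n) : Prop := 0 ∈ p.ddes ∧ 1 ∈ p.ddes

/-- Type '≥2': no descent at positions `0` and `1`. -/
def typeGe2 {n : ℕ} (p : SignedPerm n) : Prop := 0 ∉ p.ddes ∧ 1 ∉ p.ddes

/-- Type '0,≥2': descent at position `0` but not at `1`. -/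
def type0Ge2 {n : ℕ} (p : SignedPerm n) : Prop := 0 ∈ p.ddes ∧ 1 ∉ p.ddes

instance {n : ℕ} (p : SignedPerm n) : Decidable p.inD := by
  unfold SignedPerm.inD; infer_instance
instance {n : ℕ} (p : SignedPerm n) : Decidable p.type1 := by
  unfold SignedPerm.type1; infer_instance
instance {n : ℕ} (p : SignedPerm n) : Decidable p.type01 := by
  unfold SignedPerm.type01; infer_instance
instance {n : ℕ} (p : SignedPerm n) : Decidable p.typeGe2 := by
  unfold SignedPerm.typeGe2; infer_instance
instance {n : ℕ} (p : SignedPerm n) : Decidable p.type0Ge2 := by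
  unfold SignedPerm.type0Ge2; infer_instance

end SignedPerm

/-- The type `D` Eulerian number `D_{n,k}`: the number of elements of `D_n`
with exactly `k` `D`-descents (zero for `k < 0`). -/
def eulerD (n : ℕ) (k : ℤ) : ℕ :=
  (Finset.univ.filter fun p : SignedPerm n => p.inD ∧ (p.d : ℤ) = k).card

/-- The sub-Eulerian number `D_{n,k}^1`. -/
def subEuler1 (n : ℕ) (k : ℤ) : ℕ :=
  (Finset.univ.filter fun p : SignedPerm n => p.inD ∧ p.type1 ∧ (p.d : ℤ) = k).card

/-- The sub-Eulerian number `D_{n,k}^{0,1}`. -/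
def subEuler01 (n : ℕ) (k : ℤ) : ℕ :=
  (Finset.univ.filter fun p : SignedPerm n => p.inD ∧ p.type01 ∧ (p.d : ℤ) = k).card

/-- The sub-Eulerian number `D_{n,k}^{≥2}`. -/
def subEulerGe2 (n : ℕ) (k : ℤ) : ℕ :=
  (Finset.univ.filter fun p : SignedPerm n => p.inD ∧ p.typeGe2 ∧ (p.d : ℤ) = k).card

/-- The sub-Eulerian number `D_{n,k}^{0,≥2}`. -/
def subEuler0Ge2 (n : ℕ) (k : ℤ) : ℕ :=
  (Finset.univ.filter fun p : SignedPerm n => p.inD ∧ p.type0Ge2 ∧ (p.d : ℤ) = k).card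

/-- The type `D` Eulerian polynomial `D_n(t) = Σ_{π ∈ D_n} t^{d(π)}`
(with `D_0(t) = D_1(t) = 1`). -/
noncomputable def polyD (n : ℕ) : Polynomial ℚ :=
  ∑ p ∈ Finset.univ.filter (fun p : SignedPerm n => p.inD), Polynomial.X ^ p.d

/-- The sub-Eulerian polynomial `D_n^1(t)`. -/
noncomputable def polyD1 (n : ℕ) : Polynomial ℚ :=
  ∑ p ∈ Finset.univ.filter (fun p : SignedPerm n => p.inD ∧ p.type1), Polynomial.X ^ p.d

/-- The sub-Eulerian polynomial `D_n^{0,1}(t)`. -/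
noncomputable def polyD01 (n : ℕ) : Polynomial ℚ :=
  ∑ p ∈ Finset.univ.filter (fun p : SignedPerm n => p.inD ∧ p.type01), Polynomial.X ^ p.d

/-- The sub-Eulerian polynomial `D_n^{≥2}(t)`. -/
noncomputable def polyDGe2 (n : ℕ) : Polynomial ℚ :=
  ∑ p ∈ Finset.univ.filter (fun p : SignedPerm n => p.inD ∧ p.typeGe2), Polynomial.X ^ p.d

/-- The sub-Eulerian polynomial `D_n^{0,≥2}(t)`. -/
noncomputable def polyD0Ge2 (n : ℕ) : Polynomial ℚ :=
  ∑ p ∈ Finset.univ.filter (fun p : SignedPerm n => p.inD ∧ p.type0Ge2), Polynomial.X ^ p.d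

namespace Aux
open SignedPerm Finset

variable {n : ℕ}

lemma word_natAbs (p : SignedPerm n) {j : ℕ} (h1 : 1 ≤ j) (h2 : j ≤ n)
    (i : Fin n) (hij : (i : ℕ) = j - 1) :
    (p.word j).natAbs = (p.1 i).val + 1 := by
  unfold SignedPerm.word
  rw [dif_pos ⟨h1, h2⟩]
  have hi : (⟨j - 1, by omega⟩ : Fin n) = i := Fin.ext hij.symm
  rw [hi]
  cases h : p.2 i <;> simp [h] <;> omega

lemma entry_natAbs (p : SignedPerm n) {j : ℕ} (h1 : 1 ≤ j) (h2 : j ≤ n)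
    (i : Fin n) (hij : (i : ℕ) = j - 1) :
    (p.entry j).natAbs = (p.1 i).val + 1 := by
  unfold SignedPerm.entry
  rw [if_neg (by omega)]
  exact word_natAbs p h1 h2 i hij

lemma entry_natAbs_zero (p : SignedPerm n) (hn : 2 ≤ n)
    (i : Fin n) (hij : (i : ℕ) = 1) :
    (p.entry 0).natAbs = (p.1 i).val + 1 := by
  unfold SignedPerm.entry
  rw [if_pos rfl, Int.natAbs_neg]
  exact word_natAbs p (by omega) hn i hij

lemma perm_val_ne (p : SignedPerm n) {a b : Fin n} (h : (a : ℕ) ≠ b) :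
    (p.1 a).val ≠ (p.1 b).val := fun hv =>
  h (Fin.ext_iff.mp (p.1.injective (Fin.ext hv)))

/-- no ties between consecutive entries -/
lemma abs_ne (p : SignedPerm n) (hn : 2 ≤ n) {i : ℕ} (hi : i < n) :
    (p.entry i).natAbs ≠ (p.entry (i + 1)).natAbs ∧
    1 ≤ (p.entry i).natAbs ∧ 1 ≤ (p.entry (i + 1)).natAbs := by
  rcases Nat.eq_zero_or_pos i with rfl | hpos
  · set a : Fin n := ⟨1, by omega⟩ with ha
    set b : Fin n := ⟨0, by omega⟩ with hb
    rw [entry_natAbs_zero p hn a rfl, entry_natAbs p (by omega) (by omega) b rfl]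
    have := perm_val_ne p (a := a) (b := b) (by simp [ha, hb])
    omega
  · set a : Fin n := ⟨i - 1, by omega⟩ with ha
    set b : Fin n := ⟨i, by omega⟩ with hb
    rw [entry_natAbs p hpos (by omega) a rfl,
      entry_natAbs p (by omega) (by omega) b (by simp [hb])]
    have := perm_val_ne p (a := a) (b := b) (by simp [ha, hb]; omega)
    omega

end Aux

namespace Aux2
open SignedPerm Finset Aux

variable {n : ℕ}

def kflip (p : SignedPerm n) (i : Fin n) : Bool :=
  (!decide (i.val = 0)) ^^ (decide (Even n) && decide ((p.1 i).val = 0))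

def kmap (p : SignedPerm n) : SignedPerm n := (p.1, fun i => p.2 i ^^ kflip p i)

lemma kmap_fst (p : SignedPerm n) : (kmap p).1 = p.1 := rfl

lemma kmap_kmap (p : SignedPerm n) : kmap (kmap p) = p := by
  refine Prod.ext rfl (funext fun i => ?_)
  show ((p.2 i ^^ kflip p i) ^^ kflip (kmap p) i) = p.2 i
  have h : kflip (kmap p) i = kflip p i := rfl
  rw [h, Bool.xor_assoc, Bool.xor_self, Bool.xor_false]

lemma word_kmap (p : SignedPerm n) {j : ℕ} (h1 : 1 ≤ j) (h2 : j ≤ n)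
    (i : Fin n) (hij : (i : ℕ) = j - 1) :
    (kmap p).word j = (if kflip p i then -1 else 1) * p.word j := by
  unfold SignedPerm.word
  rw [dif_pos ⟨h1, h2⟩, dif_pos ⟨h1, h2⟩]
  have hi : (⟨j - 1, by omega⟩ : Fin n) = i := Fin.ext hij.symm
  rw [hi]
  show ((if (p.2 i ^^ kflip p i) then (-1:ℤ) else 1) * (((kmap p).1 i : ℕ) + 1)) = _
  have h : (kmap p).1 i = p.1 i := rfl
  rw [h]
  cases hb : p.2 i <;> cases hf : kflip p i <;> simp [hb, hf] <;> ring

lemma entry_eq_word (p : SignedPerm n) {j : ℕ} (h : j ≠ 0) : p.entry j = p.word j := by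
  unfold SignedPerm.entry; rw [if_neg h]

lemma entry_kmap_ge2 (p : SignedPerm n) {j : ℕ} (h2 : 2 ≤ j) (hjn : j ≤ n) :
    ((kmap p).entry j = p.entry j ∧ (p.entry j).natAbs = 1) ∨
      (kmap p).entry j = -p.entry j := by
  set i : Fin n := ⟨j - 1, by omega⟩ with hi
  have hw : (kmap p).entry j = (if kflip p i then -1 else 1) * p.entry j := by
    rw [entry_eq_word p (by omega), entry_eq_word (kmap p) (by omega)]
    exact word_kmap p (by omega) hjn i rfl
  by_cases hf : kflip p i = true
  · right; rw [hw, if_pos hf]; ring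
  · left
    have hval : (p.1 i).val = 0 := by
      have hne : decide (i.val = 0) = false := by
        simp [hi]; omega
      unfold kflip at hf
      rw [hne] at hf
      simp at hf
      exact hf.2
    refine ⟨by rw [hw, if_neg hf]; ring, ?_⟩
    rw [entry_natAbs p (by omega) hjn i rfl, hval]

lemma entry_kmap_one (p : SignedPerm n) (hn : 1 ≤ n) :
    ((kmap p).entry 1 = -p.entry 1 ∧ (p.entry 1).natAbs = 1) ∨
      (kmap p).entry 1 = p.entry 1 := by
  set i : Fin n := ⟨0, by omega⟩ with hi
  have hw : (kmap p).entry 1 = (if kflip p i then -1 else 1) * p.entry 1 := by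
    rw [entry_eq_word p (by omega), entry_eq_word (kmap p) (by omega)]
    exact word_kmap p (by omega) hn i rfl
  by_cases hf : kflip p i = true
  · left
    have hval : (p.1 i).val = 0 := by
      unfold kflip at hf
      simp [hi] at hf
      exact hf.2
    refine ⟨by rw [hw, if_pos hf]; ring, ?_⟩
    rw [entry_natAbs p (by omega) hn i rfl, hval]
  · right; rw [hw, if_neg hf]; ring

lemma entry_zero (p : SignedPerm n) : p.entry 0 = -(p.entry 2) := by
  unfold SignedPerm.entry
  norm_num

lemma entry_kmap_zero (p : SignedPerm n) (hn : 2 ≤ n) :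
    ((kmap p).entry 0 = p.entry 0 ∧ (p.entry 0).natAbs = 1) ∨
      (kmap p).entry 0 = -p.entry 0 := by
  have h := entry_kmap_ge2 p (le_refl 2) hn
  rw [entry_zero p, entry_zero (kmap p)]
  rcases h with ⟨h1, h2⟩ | h1
  · left; rw [h1]; simp [h2]
  · right; rw [h1]

/-- the swap of positions 0 and 1 -/
def sw (i : ℕ) : ℕ := if i = 0 then 1 else if i = 1 then 0 else i

lemma descent_kmap (p : SignedPerm n) (hn : 2 ≤ n) {i : ℕ} (hi : i < n) :
    ((kmap p).entry (i + 1) < (kmap p).entry i ↔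
      ¬(p.entry (sw i + 1) < p.entry (sw i))) := by
  have h0 := entry_zero p
  rcases Nat.lt_or_ge i 2 with h2 | h2
  · interval_cases i
    · -- i = 0 : goal about entry' 1 < entry' 0 vs ¬ (entry 2 < entry 1)
      have ha := entry_kmap_one p (by omega)
      have hb := entry_kmap_zero p hn
      have hc := abs_ne p hn (show 0 < n by omega)
      norm_num at hc
      show (kmap p).entry 1 < (kmap p).entry 0 ↔ ¬(p.entry 2 < p.entry 1)
      rcases ha with ⟨e1, a1⟩ | e1 <;> rcases hb with ⟨e2, a2⟩ | e2 <;> omega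
    · -- i = 1
      have ha := entry_kmap_one p (by omega)
      have hb := entry_kmap_ge2 p (le_refl 2) hn
      have hc := abs_ne p hn (show 0 < n by omega)
      norm_num at hc
      show (kmap p).entry 2 < (kmap p).entry 1 ↔ ¬(p.entry 1 < p.entry 0)
      rcases ha with ⟨e1, a1⟩ | e1 <;> rcases hb with ⟨e2, a2⟩ | e2 <;> omega
  · have ha := entry_kmap_ge2 p h2 (by omega)
    have hb := entry_kmap_ge2 p (show 2 ≤ i + 1 by omega) (by omega)
    have hc := abs_ne p hn hi
    have hs : sw i = i := by unfold sw; rw [if_neg (by omega), if_neg (by omega)]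
    rw [hs]
    rcases ha with ⟨e1, a1⟩ | e1 <;> rcases hb with ⟨e2, a2⟩ | e2 <;> omega

end Aux2

namespace Aux3
open SignedPerm Finset Aux Aux2

variable {n : ℕ}

lemma sw_sw (i : ℕ) : sw (sw i) = i := by
  unfold sw
  rcases i with _ | _ | k <;> simp

lemma sw_lt {i : ℕ} (hn : 2 ≤ n) (hi : i < n) : sw i < n := by
  unfold sw; split_ifs <;> omega

lemma sw_inj : Function.Injective sw := fun a b h => by
  rw [← sw_sw a, h, sw_sw]

lemma mem_ddes (p : SignedPerm n) {i : ℕ} :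
    i ∈ p.ddes ↔ i < n ∧ p.entry (i + 1) < p.entry i := by
  unfold SignedPerm.ddes
  simp [Finset.mem_filter, Finset.mem_range]

lemma mem_ddes_kmap (p : SignedPerm n) (hn : 2 ≤ n) {i : ℕ} :
    i ∈ (kmap p).ddes ↔ i < n ∧ sw i ∉ p.ddes := by
  rw [mem_ddes, mem_ddes]
  constructor
  · rintro ⟨hi, hlt⟩
    exact ⟨hi, fun h => ((descent_kmap p hn hi).mp hlt) h.2⟩
  · rintro ⟨hi, hns⟩
    refine ⟨hi, (descent_kmap p hn hi).mpr fun h => hns ⟨sw_lt hn hi, h⟩⟩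

lemma ddes_kmap (p : SignedPerm n) (hn : 2 ≤ n) :
    (kmap p).ddes = Finset.range n \ (p.ddes.image sw) := by
  ext i
  rw [mem_ddes_kmap p hn, Finset.mem_sdiff, Finset.mem_range]
  constructor
  · rintro ⟨hi, hns⟩
    refine ⟨hi, fun hmem => ?_⟩
    obtain ⟨j, hj, hji⟩ := Finset.mem_image.mp hmem
    exact hns (by rwa [← hji, sw_sw])
  · rintro ⟨hi, hni⟩
    exact ⟨hi, fun h => hni (Finset.mem_image.mpr ⟨sw i, h, sw_sw i⟩)⟩

lemma d_le (p : SignedPerm n) : p.d ≤ n := by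
  have : p.ddes ⊆ Finset.range n := Finset.filter_subset _ _
  simpa [SignedPerm.d] using Finset.card_le_card this

lemma d_kmap (p : SignedPerm n) (hn : 2 ≤ n) : (kmap p).d = n - p.d := by
  unfold SignedPerm.d
  rw [ddes_kmap p hn, Finset.card_sdiff_of_subset, Finset.card_range,
    Finset.card_image_of_injective _ sw_inj]
  intro i hi
  obtain ⟨j, hj, hji⟩ := Finset.mem_image.mp hi
  rw [Finset.mem_range, ← hji]
  exact sw_lt hn ((mem_ddes p).mp hj).1

lemma type0Ge2_kmap (p : SignedPerm n) (hn : 2 ≤ n) :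
    (kmap p).type0Ge2 ↔ p.type0Ge2 := by
  unfold SignedPerm.type0Ge2
  rw [mem_ddes_kmap p hn, mem_ddes_kmap p hn]
  have hsw0 : sw 0 = 1 := rfl
  have hsw1 : sw 1 = 0 := rfl
  rw [hsw0, hsw1]
  have h0 : (0:ℕ) < n := by omega
  have h1 : (1:ℕ) < n := by omega
  tauto

lemma type1_kmap (p : SignedPerm n) (hn : 2 ≤ n) :
    (kmap p).type1 ↔ p.type1 := by
  unfold SignedPerm.type1
  rw [mem_ddes_kmap p hn, mem_ddes_kmap p hn]
  have hsw0 : sw 0 = 1 := rfl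
  have hsw1 : sw 1 = 0 := rfl
  rw [hsw0, hsw1]
  have h0 : (0:ℕ) < n := by omega
  have h1 : (1:ℕ) < n := by omega
  tauto

/-! ### parity -/

def z (b : Bool) : ZMod 2 := if b then 1 else 0

lemma z_xor (a b : Bool) : z (a ^^ b) = z a + z b := by cases a <;> cases b <;> decide

lemma z_not (a : Bool) : z (!a) = 1 + z a := by cases a <;> decide

lemma even_iff_zmod (m : ℕ) : Even m ↔ ((m : ℕ) : ZMod 2) = 0 := by
  rw [← ZMod.natCast_mod]
  have h : m % 2 = 0 ∨ m % 2 = 1 := by omega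
  rcases h with h | h <;> rw [Nat.even_iff, h]
  · simp
  · constructor
    · intro hh; exact absurd hh one_ne_zero
    · intro hh; exact absurd hh (by decide)

lemma inD_iff (p : SignedPerm n) : p.inD ↔ ∑ i, z (p.2 i) = 0 := by
  unfold SignedPerm.inD
  rw [Finset.card_filter, even_iff_zmod]
  have hcast : (((∑ i : Fin n, if p.2 i = true then 1 else 0 : ℕ) : ℕ) : ZMod 2)
      = ∑ i : Fin n, z (p.2 i) := by
    push_cast
    refine Finset.sum_congr rfl fun i _ => ?_
    unfold z
    cases p.2 i <;> simp
  rw [hcast]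

lemma sum_z_eq_one (hn : 1 ≤ n) : (∑ i : Fin n, z (decide (i.val = 0))) = 1 := by
  have h : ∀ i : Fin n, z (decide (i.val = 0)) = if i = ⟨0, by omega⟩ then 1 else 0 := by
    intro i
    unfold z
    simp [Fin.ext_iff]
  rw [Finset.sum_congr rfl (fun i _ => h i), Finset.sum_ite_eq' Finset.univ _ (fun _ => (1 : ZMod 2))]
  simp

lemma sum_kflip (p : SignedPerm n) (hn : 1 ≤ n) : (∑ i : Fin n, z (kflip p i)) = 0 := by
  unfold kflip
  have expand : ∀ i : Fin n, z ((!decide (i.val = 0)) ^^ (decide (Even n) && decide ((p.1 i).val = 0)))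
      = (1 + z (decide (i.val = 0))) + z (decide (Even n) && decide ((p.1 i).val = 0)) := by
    intro i; rw [z_xor, z_not]
  rw [Finset.sum_congr rfl (fun i _ => expand i)]
  rw [Finset.sum_add_distrib, Finset.sum_add_distrib, Finset.sum_const, sum_z_eq_one hn]
  have hperm : (∑ i : Fin n, z (decide ((p.1 i).val = 0))) = 1 := by
    rw [Equiv.sum_comp p.1 (fun j : Fin n => z (decide (j.val = 0)))]
    exact sum_z_eq_one hn
  have hcard : (Finset.univ : Finset (Fin n)).card • (1 : ZMod 2) = ((n : ℕ) : ZMod 2) := by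
    simp [Finset.card_univ]
  by_cases he : Even n
  · have hc : decide (Even n) = true := by simp [he]
    simp only [hc, Bool.true_and, hperm]
    have hn0 : ((n : ℕ) : ZMod 2) = 0 := (even_iff_zmod n).mp he
    rw [hcard, hn0]
    decide
  · have hc : decide (Even n) = false := by simp [he]
    simp only [hc, Bool.false_and]
    have hz : (∑ _i : Fin n, z false) = 0 := by simp [z]
    rw [hz]
    have hn1 : ((n : ℕ) : ZMod 2) = 1 := by
      have hk : n % 2 = 1 := Nat.odd_iff.mp (Nat.not_even_iff_odd.mp he)
      rw [← ZMod.natCast_mod, hk]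
      simp
    rw [hcard, hn1]
    decide

lemma inD_kmap (p : SignedPerm n) (hn : 1 ≤ n) : (kmap p).inD ↔ p.inD := by
  rw [inD_iff, inD_iff]
  have h : ∀ i : Fin n, z ((kmap p).2 i) = z (p.2 i) + z (kflip p i) := fun i => z_xor _ _
  rw [Finset.sum_congr rfl (fun i _ => h i), Finset.sum_add_distrib, sum_kflip p hn, add_zero]

end Aux3

section Main
open SignedPerm Finset Aux Aux2 Aux3

variable {n : ℕ}

lemma count_pal (hn : 2 ≤ n) (T : SignedPerm n → Prop) [DecidablePred T]
    (hT : ∀ p : SignedPerm n, T (kmap p) ↔ T p) (k k' : ℤ) (hkk : k + k' = (n : ℤ)) :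
    (Finset.univ.filter fun p : SignedPerm n => p.inD ∧ T p ∧ (p.d : ℤ) = k).card =
    (Finset.univ.filter fun p : SignedPerm n => p.inD ∧ T p ∧ (p.d : ℤ) = k').card := by
  have key : ∀ (a b : ℤ), a + b = (n : ℤ) →
      ∀ p : SignedPerm n,
        p ∈ (Finset.univ.filter fun p : SignedPerm n => p.inD ∧ T p ∧ (p.d : ℤ) = a) →
        kmap p ∈ (Finset.univ.filter fun p : SignedPerm n => p.inD ∧ T p ∧ (p.d : ℤ) = b) := by
    intro a b hab p hp
    rw [Finset.mem_filter] at hp ⊢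
    obtain ⟨-, h1, h2, h3⟩ := hp
    refine ⟨Finset.mem_univ _, (inD_kmap p (by omega)).mpr h1, (hT p).mpr h2, ?_⟩
    rw [d_kmap p hn]
    have := d_le p
    omega
  exact Finset.card_bij' (fun p _ => kmap p) (fun p _ => kmap p)
    (key k k' hkk) (key k' k (by omega))
    (fun p _ => kmap_kmap p) (fun p _ => kmap_kmap p)

lemma sum_pal (hn : 2 ≤ n) (T : SignedPerm n → Prop) [DecidablePred T]
    (hT : ∀ p : SignedPerm n, T (kmap p) ↔ T p) (t : ℚ) (ht : t ≠ 0) :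
    ∑ p ∈ Finset.univ.filter (fun p : SignedPerm n => p.inD ∧ T p), t ^ p.d =
    t ^ n * ∑ p ∈ Finset.univ.filter (fun p : SignedPerm n => p.inD ∧ T p), t⁻¹ ^ p.d := by
  rw [Finset.mul_sum]
  have hmem : ∀ p : SignedPerm n,
      p ∈ Finset.univ.filter (fun p : SignedPerm n => p.inD ∧ T p) →
      kmap p ∈ Finset.univ.filter (fun p : SignedPerm n => p.inD ∧ T p) := by
    intro p hp
    rw [Finset.mem_filter] at hp ⊢
    exact ⟨Finset.mem_univ _, (inD_kmap p (by omega)).mpr hp.2.1, (hT p).mpr hp.2.2⟩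
  refine Finset.sum_bij' (fun p _ => kmap p) (fun p _ => kmap p) hmem hmem
    (fun p _ => kmap_kmap p) (fun p _ => kmap_kmap p) ?_
  intro p hp
  rw [inv_pow, ← pow_sub₀ t ht (d_le (kmap p)), d_kmap p hn]
  congr 1
  have := d_le p
  omega

lemma type0Ge2_kmap_iff (hn : 2 ≤ n) : ∀ p : SignedPerm n, (kmap p).type0Ge2 ↔ p.type0Ge2 :=
  fun p => type0Ge2_kmap p hn

lemma type1_kmap_iff (hn : 2 ≤ n) : ∀ p : SignedPerm n, (kmap p).type1 ↔ p.type1 :=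
  fun p => type1_kmap p hn

end Main

/-- **Corollary 4.3 (iv)–(v).** `D_{n,k}^{0,≥2} = D_{n,n-k}^{0,≥2}` and
`D_{n,k}^1 = D_{n,n-k}^1` for `0 ≤ k ≤ n`; i.e. `D_n^{0,≥2}(t) = t^n·D_n^{0,≥2}(t⁻¹)`
and `D_n^1(t) = t^n·D_n^1(t⁻¹)` (both polynomials are palindromic). -/
theorem subEuler0Ge2_palindromic (n : ℕ) (hn : 2 ≤ n) :
    (∀ k : ℕ, k ≤ n → subEuler0Ge2 n k = subEuler0Ge2 n ((n : ℤ) - k)) ∧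
    (∀ k : ℕ, k ≤ n → subEuler1 n k = subEuler1 n ((n : ℤ) - k)) ∧
    (∀ t : ℚ, t ≠ 0 → (polyD0Ge2 n).eval t = t ^ n * (polyD0Ge2 n).eval t⁻¹) ∧
    (∀ t : ℚ, t ≠ 0 → (polyD1 n).eval t = t ^ n * (polyD1 n).eval t⁻¹) := by
  refine ⟨?_, ?_, ?_, ?_⟩
  · intro k hk
    exact count_pal hn _ (type0Ge2_kmap_iff hn) k ((n : ℤ) - k) (by ring)
  · intro k hk
    exact count_pal hn _ (type1_kmap_iff hn) k ((n : ℤ) - k) (by ring)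
  · intro t ht
    unfold polyD0Ge2
    rw [Polynomial.eval_finset_sum, Polynomial.eval_finset_sum]
    simp only [Polynomial.eval_pow, Polynomial.eval_X]
    exact sum_pal hn _ (type0Ge2_kmap_iff hn) t ht
  · intro t ht
    unfold polyD1
    rw [Polynomial.eval_finset_sum, Polynomial.eval_finset_sum]
    simp only [Polynomial.eval_pow, Polynomial.eval_X]
    exact sum_pal hn _ (type1_kmap_iff hn) t ht
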